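/- Given sorted lists A and B each of length n partitioned into consecutive blocks of size g, the staircase search over the block matrix (Steps 4.1–4.3 of Grønlund–Pettie, advancing by whole blocks using the comparison max(A_lo) + min(B_hi) vs −c) visits at most 2⌈n/g⌉ blocks per searched element c, and every cell (i,j) of the full n×n sum matrix with A(i) + B(j) = −c lies inside a visited block. -/
import Mathlib


/-- The block-level staircase search of Grønlund–Pettie (Steps 4.1–4.3): with `A, B`
sorted and partitioned into `⌈n/g⌉` consecutive blocks of at most `g` elements, the
search over block indices `(lo, hi)` starting at `(0, ⌈n/g⌉ - 1)` — decrementing `hi`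
when `max(A_lo) + min(B_hi) > -c` and incrementing `lo` otherwise — terminates after
visiting at most `2⌈n/g⌉` blocks, and every cell `(i, j)` of the sum matrix with
`A i + B j = -c` lies inside some visited block. -/
theorem block_staircase_search (n g : ℕ) (hg : 0 < g) (hn : 0 < n)
    (A B : Fin n → ℝ) (hA : StrictMono A) (hB : StrictMono B) (c : ℝ)
    (nb : ℕ) (hnb : nb = (n + g - 1) / g)
    (q : ℕ → ℕ × ℤ)
    (h0 : q 0 = (0, (nb : ℤ) - 1))
    (hstep : ∀ t, (q t).1 < nb → 0 ≤ (q t).2 →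
      q (t + 1) =
        if A ⟨min ((q t).1 * g + g - 1) (n - 1), by omega⟩ +
             B ⟨min ((q t).2.toNat * g) (n - 1), by omega⟩ > -c
        then ((q t).1, (q t).2 - 1)
        else ((q t).1 + 1, (q t).2)) :
    (∃ t ≤ 2 * nb, (q t).1 = nb ∨ (q t).2 = -1) ∧
    (∀ i j : Fin n, A i + B j = -c →
      ∃ t, (q t).1 < nb ∧ 0 ≤ (q t).2 ∧
        (q t).1 = i.val / g ∧ (q t).2 = ((j.val / g : ℕ) : ℤ)) := by
  have h1 : nb = (n - 1) / g + 1 := by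
    have h2 : n + g - 1 = (n - 1) + g := by omega
    rw [hnb, h2, Nat.add_div_right _ hg]
  have hnb1 : 1 ≤ nb := by
    rw [h1]; exact Nat.succ_le_succ (Nat.zero_le _)
  have hkey : (nb - 1) * g ≤ n - 1 := by
    rw [h1]
    simpa using Nat.div_mul_le_self (n - 1) g
  have main : ∀ t : ℕ, (∃ s ≤ t, (q s).1 = nb ∨ (q s).2 = -1) ∨
      (((q t).1 : ℤ) + ((nb : ℤ) - 1 - (q t).2) = t ∧ (q t).1 < nb ∧ 0 ≤ (q t).2 ∧
        (q t).2 ≤ (nb : ℤ) - 1) := by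
    intro t
    induction t with
    | zero =>
      right
      rw [h0]
      simp
      omega
    | succ t ih =>
      rcases ih with ⟨s, hs, h⟩ | ⟨heq, hlo, hhi, hhi'⟩
      · exact Or.inl ⟨s, by omega, h⟩
      · have hstep' := hstep t hlo hhi
        by_cases hcmp : A ⟨min ((q t).1 * g + g - 1) (n - 1), by omega⟩ +
             B ⟨min ((q t).2.toNat * g) (n - 1), by omega⟩ > -c
        · rw [if_pos hcmp] at hstep'
          by_cases hend : (q t).2 - 1 = -1
          · exact Or.inl ⟨t + 1, le_refl _, Or.inr (by rw [hstep']; exact hend)⟩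
          · right
            rw [hstep']
            simp only
            push_cast
            omega
        · rw [if_neg hcmp] at hstep'
          by_cases hend : (q t).1 + 1 = nb
          · exact Or.inl ⟨t + 1, le_refl _, Or.inl (by rw [hstep']; exact hend)⟩
          · right
            rw [hstep']
            simp only
            push_cast
            omega
  constructor
  · rcases main (2 * nb) with ⟨s, hs, h⟩ | ⟨heq, hlo, hhi, _⟩
    · exact ⟨s, hs, h⟩
    · exfalso
      omega
  · intro i j hij
    obtain ⟨bi, hbi⟩ : ∃ b, b = i.val / g := ⟨_, rfl⟩
    obtain ⟨bj, hbj⟩ : ∃ b, b = j.val / g := ⟨_, rfl⟩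
    rw [← hbi, ← hbj]
    have hin : i.val < n := i.isLt
    have hjn : j.val < n := j.isLt
    have hi1 : bi * g ≤ i.val := by rw [hbi]; exact Nat.div_mul_le_self _ _
    have hi2 : i.val < bi * g + g := by
      have := (Nat.div_lt_iff_lt_mul hg).mp (Nat.lt_succ_self (i.val / g))
      rw [Nat.succ_mul, ← hbi] at this
      exact this
    have hj1 : bj * g ≤ j.val := by rw [hbj]; exact Nat.div_mul_le_self _ _
    have hj2 : j.val < bj * g + g := by
      have := (Nat.div_lt_iff_lt_mul hg).mp (Nat.lt_succ_self (j.val / g))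
      rw [Nat.succ_mul, ← hbj] at this
      exact this
    have hbin : bi < nb := by
      rw [hbi, h1]
      exact Nat.lt_succ_of_le (Nat.div_le_div_right (by omega))
    have hbjn : bj < nb := by
      rw [hbj, h1]
      exact Nat.lt_succ_of_le (Nat.div_le_div_right (by omega))
    have cover : ∀ k t, (q t).1 ≤ bi → (bj : ℤ) ≤ (q t).2 → (q t).2 ≤ (nb : ℤ) - 1 →
        bi - (q t).1 + ((q t).2.toNat - bj) ≤ k →
        ∃ t', (q t').1 < nb ∧ 0 ≤ (q t').2 ∧ (q t').1 = bi ∧ (q t').2 = (bj : ℤ) := by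
      intro k
      induction k with
      | zero =>
        intro t hl hh hu hm
        exact ⟨t, by omega, by omega, by omega, by omega⟩
      | succ k ih =>
        intro t hl hh hu hm
        by_cases hdone : (q t).1 = bi ∧ (q t).2 = (bj : ℤ)
        · exact ⟨t, by omega, by omega, hdone.1, hdone.2⟩
        · have hact1 : (q t).1 < nb := by omega
          have hact2 : 0 ≤ (q t).2 := by omega
          have hstep' := hstep t hact1 hact2
          by_cases hcmp : A ⟨min ((q t).1 * g + g - 1) (n - 1), by omega⟩ +
               B ⟨min ((q t).2.toNat * g) (n - 1), by omega⟩ > -c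
          · rw [if_pos hcmp] at hstep'
            -- show (q t).2 ≠ bj
            have hne : (q t).2 ≠ (bj : ℤ) := by
              intro he
              have hlo' : (q t).1 + 1 ≤ bi := by
                rcases Nat.lt_or_ge (q t).1 bi with h | h
                · omega
                · exact absurd ⟨by omega, he⟩ hdone
              have hmul := Nat.mul_le_mul_right g hlo'
              rw [add_one_mul] at hmul
              have hAlt : A ⟨min ((q t).1 * g + g - 1) (n - 1), by omega⟩ < A i :=
                hA (by simp [Fin.lt_def]; omega)
              have hBidx : (q t).2.toNat = bj := by omega
              have hBle : B ⟨min ((q t).2.toNat * g) (n - 1), by omega⟩ ≤ B j := by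
                apply hB.monotone
                rw [Fin.le_def]
                simp only [hBidx]
                omega
              linarith
            refine ih (t + 1) ?_ ?_ ?_ ?_ <;> rw [hstep']
            · exact hl
            · simp only; omega
            · simp only; omega
            · simp only; omega
          · rw [if_neg hcmp] at hstep'
            -- show (q t).1 ≠ bi
            have hne : (q t).1 ≠ bi := by
              intro he
              have hhi' : (bj : ℤ) + 1 ≤ (q t).2 := by
                rcases lt_or_ge (bj : ℤ) (q t).2 with h | h
                · omega
                · exact absurd ⟨he, by omega⟩ hdone
              have hBidx : bj + 1 ≤ (q t).2.toNat := by omega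
              have hmulB := Nat.mul_le_mul_right g hBidx
              rw [add_one_mul] at hmulB
              have hBup : (q t).2.toNat ≤ nb - 1 := by omega
              have hmulB2 := Nat.mul_le_mul_right g hBup
              have hBn : (q t).2.toNat * g ≤ n - 1 := le_trans hmulB2 hkey
              have hBgt : B j < B ⟨min ((q t).2.toNat * g) (n - 1), by omega⟩ :=
                hB (by simp [Fin.lt_def]; omega)
              have hAge : A i ≤ A ⟨min ((q t).1 * g + g - 1) (n - 1), by omega⟩ := by
                apply hA.monotone
                rw [Fin.le_def]
                simp only [he]
                omega
              push_neg at hcmp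
              linarith
            refine ih (t + 1) ?_ ?_ ?_ ?_ <;> rw [hstep']
            · simp only; omega
            · exact hh
            · exact hu
            · simp only; omega
    have start : (q 0).1 ≤ bi ∧ (bj : ℤ) ≤ (q 0).2 ∧ (q 0).2 ≤ (nb : ℤ) - 1 := by
      rw [h0]
      refine ⟨Nat.zero_le _, ?_, ?_⟩
      · simp
        omega
      · simp
    exact cover (bi - (q 0).1 + ((q 0).2.toNat - bj)) 0 start.1 start.2.1 start.2.2 le_rfl
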